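/- Let k ≥ 2 be an integer. Every symmetric polynomial matrix τ whose entries have total degree at most k−1 can be written as τ = ∇²q + sym(x^⊥ ⊗ v), where q is a polynomial of total degree at most k+1 and v = (v₁, v₂) is a polynomial vector field with components of total degree at most k−2; moreover v is uniquely determined by τ. -/

import Mathlib

open MvPolynomial Matrix

/-- Real polynomials in two variables. -/
abbrev P2 := MvPolynomial (Fin 2) ℝ

/-- The matrix `curl v` of a polynomial vector field, defined row-wise:
`(curl v)_{i1} = ∂₂ vᵢ`, `(curl v)_{i2} = -∂₁ vᵢ`. -/
noncomputable def pcurl (v : Fin 2 → P2) : Matrix (Fin 2) (Fin 2) P2 :=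
  Matrix.of fun i j =>
    if j = 0 then pderiv (1 : Fin 2) (v i) else -(pderiv (0 : Fin 2) (v i))

/-- `sym curl v := (curl v + (curl v)ᵀ)/2`. -/
noncomputable def psymCurl (v : Fin 2 → P2) : Matrix (Fin 2) (Fin 2) P2 :=
  (1 / 2 : ℝ) • (pcurl v + (pcurl v)ᵀ)

/-- `div div τ := Σ_{i,j} ∂ᵢ∂ⱼ τ_{ij}`. -/
noncomputable def pdivDiv (τ : Matrix (Fin 2) (Fin 2) P2) : P2 :=
  ∑ i : Fin 2, ∑ j : Fin 2, pderiv i (pderiv j (τ i j))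

/-- The matrix `x xᵀ q` with `(i,j)`-entry `Xᵢ · Xⱼ · q`. -/
noncomputable def xxT (q : P2) : Matrix (Fin 2) (Fin 2) P2 :=
  Matrix.of fun i j => X i * X j * q

/-- The polynomial vector `x^⊥ = (X₂, -X₁)`. -/
noncomputable def xPerp : Fin 2 → P2 := ![X 1, -X 0]

/-- `rot τ`, with components `(rot τ)ᵢ = ∂₁ τ_{i2} - ∂₂ τ_{i1}`. -/
noncomputable def prot (τ : Matrix (Fin 2) (Fin 2) P2) : Fin 2 → P2 :=
  fun i => pderiv (0 : Fin 2) (τ i 1) - pderiv (1 : Fin 2) (τ i 0)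

/-- The Hessian matrix `∇²q` with entries `∂ᵢ∂ⱼ q`. -/
noncomputable def phess (q : P2) : Matrix (Fin 2) (Fin 2) P2 :=
  Matrix.of fun i j => pderiv i (pderiv j q)

/-- `sym(x^⊥ ⊗ v)`, the symmetric matrix with `(i,j)`-entry
`((x^⊥)ᵢ vⱼ + vᵢ (x^⊥)ⱼ)/2`. -/
noncomputable def symTen (v : Fin 2 → P2) : Matrix (Fin 2) (Fin 2) P2 :=
  Matrix.of fun i j => (1 / 2 : ℝ) • (xPerp i * v j + v i * xPerp j)

/-- The gradient matrix `∇v` with entries `(∇v)_{ij} = ∂ⱼ vᵢ`. -/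
noncomputable def pgrad (v : Fin 2 → P2) : Matrix (Fin 2) (Fin 2) P2 :=
  Matrix.of fun i j => pderiv j (v i)

/-- The symmetric gradient `def v := (∇v + (∇v)ᵀ)/2`. -/
noncomputable def pdef (v : Fin 2 → P2) : Matrix (Fin 2) (Fin 2) P2 :=
  (1 / 2 : ℝ) • (pgrad v + (pgrad v)ᵀ)

/-- The matrix `x^⊥ (x^⊥)ᵀ q` with `(i,j)`-entry `(x^⊥)ᵢ (x^⊥)ⱼ q`. -/
noncomputable def xPerpxPerpT (q : P2) : Matrix (Fin 2) (Fin 2) P2 :=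
  Matrix.of fun i j => xPerp i * xPerp j * q

/-- `rot rot τ := ∂₁(rot τ)₂ − ∂₂(rot τ)₁`. -/
noncomputable def protRot (τ : Matrix (Fin 2) (Fin 2) P2) : P2 :=
  pderiv (0 : Fin 2) (prot τ 1) - pderiv (1 : Fin 2) (prot τ 0)

namespace S16

def dm (m : Fin 2 →₀ ℕ) : ℕ := m 0 + m 1

lemma sum_eq_dm (m : Fin 2 →₀ ℕ) : (m.sum fun _ e => e) = dm m := by
  rw [Finsupp.sum_fintype _ _ (fun _ => rfl), Fin.sum_univ_two]; rfl

lemma sum_id_eq_dm (m : Fin 2 →₀ ℕ) : (m.sum fun _ ↦ id) = dm m := sum_eq_dm m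

lemma dm_sub_single (j : Fin 2) (m : Fin 2 →₀ ℕ) (h : m j ≠ 0) :
    dm (m - Finsupp.single j 1) = dm m - 1 := by
  unfold dm
  simp only [Finsupp.tsub_apply, Finsupp.single_apply]
  fin_cases j <;> simp_all <;> omega

lemma single_add_sub (j : Fin 2) (m : Fin 2 →₀ ℕ) (h : m j ≠ 0) :
    Finsupp.single j 1 + (m - Finsupp.single j 1) = m := by
  ext i
  simp only [Finsupp.add_apply, Finsupp.tsub_apply, Finsupp.single_apply]
  by_cases hij : j = i
  · subst hij; simp; omega
  · simp [hij]

lemma X_mul_pderiv_monomial (i : Fin 2) (m : Fin 2 →₀ ℕ) (a : ℝ) :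
    X i * pderiv i (monomial m a : P2) = ((m i : ℝ)) • monomial m a := by
  rw [pderiv_monomial]
  by_cases h : m i = 0
  · simp [h]
  · rw [X, monomial_mul, one_mul, single_add_sub i m h, smul_eq_C_mul, C_mul_monomial,
      mul_comm]

lemma euler_monomial (m : Fin 2 →₀ ℕ) (a : ℝ) :
    ∑ i : Fin 2, X i * pderiv i (monomial m a : P2) = ((dm m : ℝ)) • monomial m a := by
  rw [Fin.sum_univ_two, X_mul_pderiv_monomial, X_mul_pderiv_monomial, ← add_smul]
  congr 1
  unfold dm; push_cast; ring

noncomputable def Tq (f : P2) : P2 :=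
  ∑ i : Fin 2, ∑ j : Fin 2, X i * X j * pderiv i (pderiv j f)

lemma Tq_monomial (m : Fin 2 →₀ ℕ) (a : ℝ) :
    Tq (monomial m a) = ((dm m : ℝ) * ((dm m : ℝ) - 1)) • monomial m a := by
  unfold Tq
  rw [Finset.sum_comm]
  have key : ∀ j : Fin 2, ∑ i : Fin 2, X i * X j * pderiv i (pderiv j (monomial m a : P2))
      = ((dm m : ℝ) - 1) • (X j * pderiv j (monomial m a : P2)) := by
    intro j
    rw [pderiv_monomial]
    by_cases h : m j = 0
    · simp [h]
    · calc ∑ i : Fin 2, X i * X j * pderiv i (monomial (m - Finsupp.single j 1) (a * m j) : P2)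
          = X j * ∑ i : Fin 2, X i * pderiv i (monomial (m - Finsupp.single j 1) (a * m j) : P2) := by
            rw [Finset.mul_sum]; exact Finset.sum_congr rfl (fun i _ => by ring)
        _ = X j * (((dm (m - Finsupp.single j 1) : ℝ)) • monomial (m - Finsupp.single j 1) (a * m j)) := by
            rw [euler_monomial]
        _ = ((dm m : ℝ) - 1) • (X j * monomial (m - Finsupp.single j 1) (a * m j)) := by
            rw [dm_sub_single j m h, mul_smul_comm]
            congr 2
            have h1 : 1 ≤ dm m := by unfold dm; fin_cases j <;> simp_all <;> omega
            push_cast [Nat.cast_sub h1]; ring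
  rw [Finset.sum_congr rfl (fun j _ => key j), ← Finset.smul_sum, euler_monomial, smul_smul]
  ring_nf

lemma Tq_sum {ι : Type*} (s : Finset ι) (g : ι → P2) :
    Tq (∑ x ∈ s, g x) = ∑ x ∈ s, Tq (g x) := by
  unfold Tq
  simp only [map_sum, Finset.mul_sum]
  calc ∑ i : Fin 2, ∑ j : Fin 2, ∑ x ∈ s, X i * X j * pderiv i (pderiv j (g x))
      = ∑ i : Fin 2, ∑ x ∈ s, ∑ j : Fin 2, X i * X j * pderiv i (pderiv j (g x)) :=
        Finset.sum_congr rfl fun i _ => Finset.sum_comm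
    _ = ∑ x ∈ s, ∑ i : Fin 2, ∑ j : Fin 2, X i * X j * pderiv i (pderiv j (g x)) :=
        Finset.sum_comm

lemma Tq_as_sum (f : P2) :
    Tq f = ∑ m ∈ f.support, ((dm m : ℝ) * ((dm m : ℝ) - 1)) • monomial m (coeff m f) := by
  conv_lhs => rw [f.as_sum, Tq_sum]
  exact Finset.sum_congr rfl fun m _ => Tq_monomial m _

lemma coeff_Tq (f : P2) (n : Fin 2 →₀ ℕ) :
    coeff n (Tq f) = ((dm n : ℝ) * ((dm n : ℝ) - 1)) * coeff n f := by
  rw [Tq_as_sum, coeff_sum]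
  rw [Finset.sum_eq_single n]
  · rw [coeff_smul, coeff_monomial, if_pos rfl, smul_eq_mul]
  · intro m _ hmn
    rw [coeff_smul, coeff_monomial, if_neg hmn, smul_eq_mul, mul_zero]
  · intro hn
    rw [notMem_support_iff.mp hn]
    simp

lemma pderiv_pderiv_comm (i j : Fin 2) (f : P2) :
    pderiv i (pderiv j f) = pderiv j (pderiv i f) := by
  induction f using MvPolynomial.induction_on' with
  | monomial m a =>
    simp only [pderiv_monomial]
    have he : m - Finsupp.single j 1 - Finsupp.single i 1
        = m - Finsupp.single i 1 - Finsupp.single j 1 := by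
      ext l; simp only [Finsupp.tsub_apply]; omega
    have hc : (a * (m j)) * (((m - Finsupp.single j 1 : Fin 2 →₀ ℕ) i : ℕ) : ℝ)
        = (a * (m i)) * (((m - Finsupp.single i 1 : Fin 2 →₀ ℕ) j : ℕ) : ℝ) := by
      by_cases hij : i = j
      · subst hij; ring
      · have h1 : (m - Finsupp.single j 1 : Fin 2 →₀ ℕ) i = m i := by
          simp [Finsupp.tsub_apply, Finsupp.single_apply, Ne.symm hij]
        have h2 : (m - Finsupp.single i 1 : Fin 2 →₀ ℕ) j = m j := by
          simp [Finsupp.tsub_apply, Finsupp.single_apply, hij]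
        rw [h1, h2]; ring
    rw [he, hc]
  | add p q hp hq => simp [map_add, hp, hq]

lemma totalDegree_pderiv_le (i : Fin 2) (f : P2) :
    (pderiv i f).totalDegree ≤ f.totalDegree - 1 := by
  conv_lhs => rw [f.as_sum]
  rw [map_sum]
  apply totalDegree_finsetSum_le
  intro m hm
  rw [pderiv_monomial]
  by_cases h : m i = 0
  · simp [h]
  · refine (totalDegree_monomial_le _ _).trans ?_
    rw [sum_id_eq_dm, dm_sub_single i m h]
    have h2 := le_totalDegree hm
    rw [sum_eq_dm] at h2
    omega

lemma X_dvd_of_coeff (s : Fin 2) (p : P2) (h : ∀ m : Fin 2 →₀ ℕ, m s = 0 → coeff m p = 0) :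
    X s ∣ p := by
  conv_rhs => rw [p.as_sum]
  apply Finset.dvd_sum
  intro m _
  rw [X_dvd_monomial]
  by_cases h0 : m s = 0
  · exact Or.inl (h m h0)
  · exact Or.inr h0

lemma totalDegree_of_X_mul {s : Fin 2} {a : P2} {D : ℕ}
    (hle : (X s * a).totalDegree ≤ D) (hD : 1 ≤ D) : a.totalDegree ≤ D - 1 := by
  refine Finset.sup_le fun m hm => ?_
  have hmem : Finsupp.single s 1 + m ∈ (X s * a).support := by
    rw [mem_support_iff, coeff_X_mul]
    exact mem_support_iff.mp hm
  have h2 := le_totalDegree hmem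
  rw [sum_eq_dm] at h2
  have h3 : dm (Finsupp.single s 1 + m) = 1 + dm m := by
    unfold dm
    simp only [Finsupp.add_apply, Finsupp.single_apply]
    fin_cases s <;> simp <;> omega
  have h4 := h2.trans hle
  rw [show (m.sum fun _ e => e) = dm m from sum_eq_dm m]
  omega

noncomputable def Pq (A : Matrix (Fin 2) (Fin 2) P2) : P2 :=
  ∑ i : Fin 2, ∑ j : Fin 2, X i * X j * A i j

lemma Pq_phess (q : P2) : Pq (phess q) = Tq q := rfl

lemma Pq_add (A B : Matrix (Fin 2) (Fin 2) P2) : Pq (A + B) = Pq A + Pq B := by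
  unfold Pq
  simp [Matrix.add_apply, mul_add, Finset.sum_add_distrib]

lemma Pq_symTen (v : Fin 2 → P2) : Pq (symTen v) = 0 := by
  unfold Pq symTen
  simp only [Fin.sum_univ_two, Matrix.of_apply, smul_eq_C_mul]
  show X 0 * X 0 * (C (1/2:ℝ) * (X 1 * v 0 + v 0 * X 1))
      + X 0 * X 1 * (C (1/2:ℝ) * (X 1 * v 1 + v 0 * (-X 0)))
      + (X 1 * X 0 * (C (1/2:ℝ) * ((-X 0) * v 0 + v 1 * X 1))
      + X 1 * X 1 * (C (1/2:ℝ) * ((-X 0) * v 1 + v 1 * (-X 0)))) = 0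
  ring

lemma coeff_Pq_low (A : Matrix (Fin 2) (Fin 2) P2) (n : Fin 2 →₀ ℕ) (hn : dm n ≤ 1) :
    coeff n (Pq A) = 0 := by
  unfold Pq
  rw [coeff_sum]
  refine Finset.sum_eq_zero fun i _ => ?_
  rw [coeff_sum]
  refine Finset.sum_eq_zero fun j _ => ?_
  classical
  rw [mul_assoc, coeff_X_mul']
  split_ifs with hi
  · rw [coeff_X_mul']
    split_ifs with hj
    · exfalso
      rw [Finsupp.mem_support_iff] at hi hj
      rw [Finsupp.tsub_apply, Finsupp.single_apply] at hj
      unfold dm at hn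
      fin_cases i <;> fin_cases j <;> simp_all <;> omega
    · rfl
  · rfl

lemma exists_q (p : P2) (hsupp : ∀ n ∈ p.support, 2 ≤ dm n) :
    ∃ q : P2, Tq q = p ∧ q.totalDegree ≤ p.totalDegree := by
  refine ⟨∑ n ∈ p.support, monomial n (coeff n p / ((dm n : ℝ) * ((dm n : ℝ) - 1))), ?_, ?_⟩
  · rw [Tq_sum]
    conv_rhs => rw [p.as_sum]
    refine Finset.sum_congr rfl fun n hn => ?_
    rw [Tq_monomial, smul_monomial]
    congr 1
    have h2 := hsupp n hn
    have h3 : (2:ℝ) ≤ (dm n : ℝ) := by exact_mod_cast h2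
    have hD : ((dm n : ℝ) * ((dm n : ℝ) - 1)) ≠ 0 := by nlinarith
    rw [smul_eq_mul]
    have hD1 : (dm n : ℝ) - 1 ≠ 0 := by linarith
    field_simp
  · apply totalDegree_finsetSum_le
    intro n hn
    refine (totalDegree_monomial_le _ _).trans ?_
    rw [sum_id_eq_dm]
    have h := le_totalDegree hn
    rwa [sum_eq_dm] at h

lemma pderiv_eq_zero_of_totalDegree_eq_zero (i : Fin 2) (f : P2)
    (h : f.totalDegree = 0) : pderiv i f = 0 := by
  conv_lhs => rw [f.as_sum]
  rw [map_sum]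
  refine Finset.sum_eq_zero fun m hm => ?_
  have h1 := le_totalDegree hm
  rw [sum_eq_dm, h] at h1
  have h2 : m i = 0 := by
    unfold dm at h1
    fin_cases i
    · show m 0 = 0; omega
    · show m 1 = 0; omega
  rw [pderiv_monomial, h2]
  simp

end S16

/-- Decomposition `τ = ∇²q + sym(x^⊥ ⊗ v)` of symmetric polynomial matrices of
degree ≤ k−1, with `v` uniquely determined by `τ`. -/



theorem stmt_16 (k : ℕ) (hk : 2 ≤ k) (τ : Matrix (Fin 2) (Fin 2) P2)
    (hsym : τᵀ = τ) (hdeg : ∀ i j, (τ i j).totalDegree ≤ k - 1) :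
    ∃ v : Fin 2 → P2, (∀ i, (v i).totalDegree ≤ k - 2) ∧
      (∃ q : P2, q.totalDegree ≤ k + 1 ∧ τ = phess q + symTen v) ∧
      ∀ v' : Fin 2 → P2, (∀ i, (v' i).totalDegree ≤ k - 2) →
        (∃ q' : P2, q'.totalDegree ≤ k + 1 ∧ τ = phess q' + symTen v') →
        v' = v := by
  classical
  have hC2 : (C (1/2:ℝ) : P2) * 2 = 1 := by
    rw [show (2:P2) = C (2:ℝ) from (map_ofNat C 2).symm, ← _root_.map_mul]
    norm_num
  -- the pairing polynomial
  have hp_supp : ∀ n ∈ (S16.Pq τ).support, 2 ≤ S16.dm n := by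
    intro n hn
    by_contra hlt
    push_neg at hlt
    exact mem_support_iff.mp hn (S16.coeff_Pq_low τ n (by omega))
  obtain ⟨q, hTq, hqdeg0⟩ := S16.exists_q (S16.Pq τ) hp_supp
  have hpdeg : (S16.Pq τ).totalDegree ≤ k + 1 := by
    refine totalDegree_finsetSum_le fun i _ => totalDegree_finsetSum_le fun j _ => ?_
    calc (X i * X j * τ i j).totalDegree
        ≤ ((X i * X j : P2)).totalDegree + (τ i j).totalDegree := totalDegree_mul _ _
      _ ≤ (X i : P2).totalDegree + (X j : P2).totalDegree + (τ i j).totalDegree := by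
          have := totalDegree_mul (X i : P2) (X j); omega
      _ ≤ 1 + 1 + (k - 1) := by
          rw [totalDegree_X, totalDegree_X]
          have := hdeg i j; omega
      _ ≤ k + 1 := by omega
  have hqdeg : q.totalDegree ≤ k + 1 := hqdeg0.trans hpdeg
  -- degree bounds on the hessian entries
  have hhe : ∀ i j : Fin 2, (pderiv i (pderiv j q)).totalDegree ≤ k - 1 := by
    intro i j
    have h2 := S16.totalDegree_pderiv_le j q
    have h3 := S16.totalDegree_pderiv_le i (pderiv j q)
    omega
  have hσdeg : ∀ i j : Fin 2, (τ i j - pderiv i (pderiv j q)).totalDegree ≤ k - 1 := by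
    intro i j
    rw [sub_eq_add_neg]
    refine (totalDegree_add _ _).trans ?_
    rw [totalDegree_neg]
    exact max_le (hdeg i j) (hhe i j)
  -- the fundamental relation
  have hPσ : X 0 * X 0 * (τ 0 0 - pderiv 0 (pderiv 0 q))
      + X 0 * X 1 * (τ 0 1 - pderiv 0 (pderiv 1 q))
      + (X 1 * X 0 * (τ 1 0 - pderiv 1 (pderiv 0 q))
      + X 1 * X 1 * (τ 1 1 - pderiv 1 (pderiv 1 q))) = 0 := by
    have h0 := hTq
    unfold S16.Tq S16.Pq at h0
    simp only [Fin.sum_univ_two] at h0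
    linear_combination -h0
  -- symmetry facts
  have hτ10 : τ 1 0 = τ 0 1 := by
    have h := congrFun (congrFun hsym 0) 1
    simpa [Matrix.transpose_apply] using h
  have hcomm : pderiv (1:Fin 2) (pderiv (0:Fin 2) q) = pderiv 0 (pderiv 1 q) :=
    S16.pderiv_pderiv_comm 1 0 q
  -- divisibility: X 1 ∣ σ₀₀
  have hdvd1 : X 1 ∣ (τ 0 0 - pderiv 0 (pderiv 0 q)) := by
    apply S16.X_dvd_of_coeff
    intro m hm
    have hrel : X 0 * (X 0 * (τ 0 0 - pderiv 0 (pderiv 0 q)))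
        = -(X 1 * (X 0 * (τ 0 1 - pderiv 0 (pderiv 1 q))
          + X 0 * (τ 1 0 - pderiv 1 (pderiv 0 q))
          + X 1 * (τ 1 1 - pderiv 1 (pderiv 1 q)))) := by
      linear_combination hPσ
    have e1 : coeff (Finsupp.single 0 1 + (Finsupp.single 0 1 + m))
        (X 0 * (X 0 * (τ 0 0 - pderiv 0 (pderiv 0 q)))) = coeff m (τ 0 0 - pderiv 0 (pderiv 0 q)) := by
      rw [coeff_X_mul, coeff_X_mul]
    rw [hrel, coeff_neg, coeff_X_mul'] at e1
    rw [if_neg (by simp [Finsupp.mem_support_iff, Finsupp.add_apply, Finsupp.single_apply, hm])] at e1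
    rw [← e1, neg_zero]
  obtain ⟨v0, hv0⟩ := hdvd1
  -- divisibility: X 0 ∣ σ₁₁
  have hdvd0 : X 0 ∣ (τ 1 1 - pderiv 1 (pderiv 1 q)) := by
    apply S16.X_dvd_of_coeff
    intro m hm
    have hrel : X 1 * (X 1 * (τ 1 1 - pderiv 1 (pderiv 1 q)))
        = -(X 0 * (X 0 * (τ 0 0 - pderiv 0 (pderiv 0 q))
          + X 1 * (τ 0 1 - pderiv 0 (pderiv 1 q))
          + X 1 * (τ 1 0 - pderiv 1 (pderiv 0 q)))) := by
      linear_combination hPσ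
    have e1 : coeff (Finsupp.single 1 1 + (Finsupp.single 1 1 + m))
        (X 1 * (X 1 * (τ 1 1 - pderiv 1 (pderiv 1 q)))) = coeff m (τ 1 1 - pderiv 1 (pderiv 1 q)) := by
      rw [coeff_X_mul, coeff_X_mul]
    rw [hrel, coeff_neg, coeff_X_mul'] at e1
    rw [if_neg (by simp [Finsupp.mem_support_iff, Finsupp.add_apply, Finsupp.single_apply, hm])] at e1
    rw [← e1, neg_zero]
  obtain ⟨w, hw⟩ := hdvd0
  -- middle entry
  have hmid : τ 0 1 - pderiv 0 (pderiv 1 q) = C (1/2:ℝ) * (X 1 * (-w) + v0 * (-X 0)) := by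
    have hfac : (X 0 * X 1) * (X 0 * v0 + 2 * (τ 0 1 - pderiv 0 (pderiv 1 q)) + X 1 * w) = 0 := by
      have hB : τ 1 0 - pderiv 1 (pderiv 0 q) = τ 0 1 - pderiv 0 (pderiv 1 q) := by
        rw [hτ10, hcomm]
      linear_combination hPσ - (X 0 * X 0) * hv0 - (X 1 * X 0) * hB - (X 1 * X 1) * hw
    have hne : (X 0 : P2) * X 1 ≠ 0 := mul_ne_zero (X_ne_zero 0) (X_ne_zero 1)
    have h2 : X 0 * v0 + 2 * (τ 0 1 - pderiv 0 (pderiv 1 q)) + X 1 * w = 0 := by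
      rcases mul_eq_zero.mp hfac with h | h
      · exact absurd h hne
      · exact h
    linear_combination C (1/2:ℝ) * h2 - (τ 0 1 - pderiv 0 (pderiv 1 q)) * hC2
  -- the decomposition
  have hdec : τ = phess q + symTen ![v0, -w] := by
    refine Matrix.ext fun i j => ?_
    fin_cases i <;> fin_cases j <;>
      simp only [Matrix.add_apply, phess, symTen, Matrix.of_apply, xPerp, Fin.mk_zero, Fin.mk_one,
        Matrix.cons_val_zero, Matrix.cons_val_one, Matrix.head_cons, smul_eq_C_mul]
    · linear_combination hv0 - (X 1 * v0) * hC2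
    · linear_combination hmid
    · linear_combination hmid + hτ10 - hcomm
    · linear_combination hw - (X 0 * w) * hC2
  refine ⟨![v0, -w], ?_, ⟨q, hqdeg, hdec⟩, ?_⟩
  · -- degree bounds on v
    intro i
    fin_cases i
    · show v0.totalDegree ≤ k - 2
      have h1 : (X 1 * v0).totalDegree ≤ k - 1 := hv0 ▸ hσdeg 0 0
      have h2 := S16.totalDegree_of_X_mul h1 (by omega)
      omega
    · show (-w).totalDegree ≤ k - 2
      rw [totalDegree_neg]
      have h1 : (X 0 * w).totalDegree ≤ k - 1 := hw ▸ hσdeg 1 1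
      have h2 := S16.totalDegree_of_X_mul h1 (by omega)
      omega
  · -- uniqueness
    rintro v' hdeg' ⟨q', hq'deg, hq'eq⟩
    have h1 : S16.Tq q = S16.Tq q' := by
      have h0 : S16.Pq (phess q + symTen ![v0, -w]) = S16.Pq (phess q' + symTen v') := by
        rw [← hdec, ← hq'eq]
      rwa [S16.Pq_add, S16.Pq_add, S16.Pq_phess, S16.Pq_phess, S16.Pq_symTen, S16.Pq_symTen,
        add_zero, add_zero] at h0
    have h2 : ∀ n : Fin 2 →₀ ℕ, 2 ≤ S16.dm n → coeff n q = coeff n q' := by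
      intro n hn
      have h3 := congrArg (coeff n) h1
      rw [S16.coeff_Tq, S16.coeff_Tq] at h3
      have h4 : (2:ℝ) ≤ (S16.dm n : ℝ) := by exact_mod_cast hn
      have hD : ((S16.dm n : ℝ) * ((S16.dm n : ℝ) - 1)) ≠ 0 := by nlinarith
      exact mul_left_cancel₀ hD h3
    have h5 : (q - q').totalDegree ≤ 1 := by
      refine Finset.sup_le fun m hm => ?_
      rw [S16.sum_eq_dm]
      by_contra hgt
      push_neg at hgt
      exact mem_support_iff.mp hm (by rw [coeff_sub, h2 m (by omega), sub_self])
    have hph : ∀ i j : Fin 2, pderiv i (pderiv j q) = pderiv i (pderiv j q') := by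
      intro i j
      have h6 : (pderiv j (q - q')).totalDegree = 0 := by
        have := S16.totalDegree_pderiv_le j (q - q')
        omega
      have h7 := S16.pderiv_eq_zero_of_totalDegree_eq_zero i _ h6
      rw [map_sub, map_sub] at h7
      exact sub_eq_zero.mp h7
    have hphess : phess q' = phess q := by
      refine Matrix.ext fun i j => ?_
      exact (hph i j).symm
    have h8 : symTen v' = symTen ![v0, -w] := by
      calc symTen v' = (phess q' + symTen v') - phess q' := (add_sub_cancel_left _ _).symm
        _ = (phess q + symTen ![v0, -w]) - phess q := by rw [← hq'eq, ← hdec, hphess]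
        _ = symTen ![v0, -w] := add_sub_cancel_left _ _
    funext i
    fin_cases i
    · show v' 0 = v0
      have e00 := congrFun (congrFun h8 0) 0
      simp only [symTen, Matrix.of_apply, xPerp, Matrix.cons_val_zero, Matrix.cons_val_one,
        Matrix.head_cons, smul_eq_C_mul] at e00
      have h9 : X 1 * (v' 0 - v0) = 0 := by
        linear_combination e00 - (X 1 * (v' 0 - v0)) * hC2
      rcases mul_eq_zero.mp h9 with h | h
      · exact absurd h (X_ne_zero 1)
      · exact sub_eq_zero.mp h
    · show v' 1 = -w
      have e11 := congrFun (congrFun h8 1) 1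
      simp only [symTen, Matrix.of_apply, xPerp, Matrix.cons_val_zero, Matrix.cons_val_one,
        Matrix.head_cons, smul_eq_C_mul] at e11
      have h9 : X 0 * (v' 1 - (-w)) = 0 := by
        linear_combination -e11 - (X 0 * (v' 1 - (-w))) * hC2
      rcases mul_eq_zero.mp h9 with h | h
      · exact absurd h (X_ne_zero 0)
      · exact sub_eq_zero.mp h
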